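/- Let n > 0 and let 0 < y̲ < ȳ < 1. Then the Beta-Binomial distribution with prior mean parameter ȳ first-order stochastically dominates the one with prior mean parameter y̲; that is, for every l ∈ {0,…,m}, Σ_{j=0}^{l} p(j | ȳ, n, m, s, N) ≤ Σ_{j=0}^{l} p(j | y̲, n, m, s, N). -/

import Mathlib

/-- The Euler Beta function `B(a,b) = Γ(a)Γ(b)/Γ(a+b)`. -/
noncomputable def eulerBeta (a b : ℝ) : ℝ := Real.Gamma a * Real.Gamma b / Real.Gamma (a + b)

/-- The Beta-Binomial probability mass function
`p(l ∣ y, n, m, s, N) = C(m,l) · B(l + ny + s, m − l + n(1−y) + N − s) / B(ny + s, n(1−y) + N − s)`. -/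
noncomputable def bbPmf (y n : ℝ) (m s N : ℕ) (l : ℕ) : ℝ :=
  (m.choose l : ℝ) *
    eulerBeta ((l : ℝ) + n * y + s) ((m : ℝ) - l + n * (1 - y) + N - s) /
    eulerBeta (n * y + s) (n * (1 - y) + N - s)

lemma eulerBeta_pos {a b : ℝ} (ha : 0 < a) (hb : 0 < b) : 0 < eulerBeta a b :=
  div_pos (mul_pos (Real.Gamma_pos_of_pos ha) (Real.Gamma_pos_of_pos hb))
    (Real.Gamma_pos_of_pos (by linarith))

lemma eulerBeta_rec {a b : ℝ} (ha : 0 < a) (hb : 0 < b) :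
    eulerBeta a b = eulerBeta (a + 1) b + eulerBeta a (b + 1) := by
  unfold eulerBeta
  have hab : (0:ℝ) < a + b := by linarith
  have h1 : a + 1 + b = (a + b) + 1 := by ring
  have h2 : a + (b + 1) = (a + b) + 1 := by ring
  rw [h1, h2, Real.Gamma_add_one ha.ne', Real.Gamma_add_one hb.ne',
    Real.Gamma_add_one hab.ne']
  have hg : Real.Gamma (a + b) ≠ 0 := (Real.Gamma_pos_of_pos hab).ne'
  field_simp

lemma eulerBeta_shift {a b : ℝ} (ha : 0 < a) (hb : 0 < b) :
    eulerBeta (a + 1) b = (a / b) * eulerBeta a (b + 1) := by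
  unfold eulerBeta
  have h1 : a + 1 + b = (a + b) + 1 := by ring
  have h2 : a + (b + 1) = (a + b) + 1 := by ring
  rw [h1, h2, Real.Gamma_add_one ha.ne', Real.Gamma_add_one hb.ne']
  field_simp

lemma beta_sum (m : ℕ) : ∀ (a b : ℝ), 0 < a → 0 < b →
    ∑ l ∈ Finset.range (m + 1),
      (m.choose l : ℝ) * eulerBeta ((l : ℝ) + a) (((m : ℝ) - l) + b) = eulerBeta a b := by
  induction m with
  | zero => intro a b ha hb; simp
  | succ m ih =>
    intro a b ha hb
    set f : ℕ → ℝ := fun l => eulerBeta ((l : ℝ) + a) ((((m:ℝ) + 1) - l) + b) with hf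
    have hgoal : ∑ l ∈ Finset.range (m + 1 + 1),
        ((m+1).choose l : ℝ) * eulerBeta ((l : ℝ) + a) (((↑(m+1) : ℝ)) - l + b)
        = ∑ l ∈ Finset.range (m + 2), ((m+1).choose l : ℝ) * f l := by
      refine Finset.sum_congr rfl fun l _ => ?_
      simp only [hf]; push_cast; ring_nf
    have h1 := Finset.sum_range_succ' (fun l => ((m+1).choose l : ℝ) * f l) (m+1)
    have h2 := Finset.sum_range_succ' (fun l => (m.choose l : ℝ) * f l) (m+1)
    have h3 := Finset.sum_range_succ (fun l => (m.choose l : ℝ) * f l) (m+1)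
    have pas : ∑ l ∈ Finset.range (m+1), (((m+1).choose (l+1) : ℝ)) * f (l+1)
        = ∑ l ∈ Finset.range (m+1), (m.choose l : ℝ) * f (l+1)
          + ∑ l ∈ Finset.range (m+1), (m.choose (l+1) : ℝ) * f (l+1) := by
      rw [← Finset.sum_add_distrib]
      refine Finset.sum_congr rfl fun l _ => ?_
      rw [Nat.choose_succ_succ]
      push_cast; ring
    have ihA : ∑ l ∈ Finset.range (m+1), (m.choose l : ℝ) * f (l+1) = eulerBeta (a+1) b := by
      rw [← ih (a+1) b (by linarith) hb]
      refine Finset.sum_congr rfl fun l _ => ?_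
      simp only [hf]; push_cast; ring_nf
    have ihB : ∑ l ∈ Finset.range (m+1), (m.choose l : ℝ) * f l = eulerBeta a (b+1) := by
      rw [← ih a (b+1) ha (by linarith)]
      refine Finset.sum_congr rfl fun l _ => ?_
      simp only [hf]; push_cast; ring_nf
    simp only [Nat.choose_zero_right, Nat.choose_succ_self, Nat.cast_one, Nat.cast_zero,
      one_mul, zero_mul, add_zero] at h1 h2 h3
    rw [hgoal, h1, pas, ihA]
    rw [h3] at h2
    rw [ihB] at h2
    rw [eulerBeta_rec ha hb]
    linarith

lemma bbPmf_eq (y n : ℝ) (m s N l : ℕ) :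
    bbPmf y n m s N l = (m.choose l : ℝ) *
      eulerBeta ((l : ℝ) + (n * y + s)) (((m : ℝ) - l) + (n * (1 - y) + N - s)) /
      eulerBeta (n * y + s) (n * (1 - y) + N - s) := by
  unfold bbPmf; ring_nf

section
variable {y n : ℝ} {m s N : ℕ}
variable (hn : 0 < n) (hy0 : 0 < y) (hy1 : y < 1) (hsN : s ≤ N)
include hn hy0 hy1 hsN

lemma alpha_pos : 0 < n * y + (s:ℕ) := by positivity

lemma beta_pos : 0 < n * (1 - y) + (N:ℝ) - (s:ℝ) := by
  have : (s:ℝ) ≤ (N:ℝ) := Nat.cast_le.mpr hsN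
  nlinarith

lemma bbPmf_pos {l : ℕ} (hl : l ≤ m) : 0 < bbPmf y n m s N l := by
  rw [bbPmf_eq]
  have hs : (s:ℝ) ≤ (N:ℝ) := Nat.cast_le.mpr hsN
  have hml : (l:ℝ) ≤ (m:ℝ) := Nat.cast_le.mpr hl
  have hA : (0:ℝ) < n * y + s := by positivity
  have hB : (0:ℝ) < n * (1 - y) + N - s := by nlinarith
  have hc : (0:ℝ) < (m.choose l : ℝ) := by exact_mod_cast Nat.choose_pos hl
  have h1 : (0:ℝ) < (l:ℝ) + (n * y + s) := by positivity
  have h2 : (0:ℝ) < ((m:ℝ) - l) + (n * (1 - y) + N - s) := by nlinarith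
  exact div_pos (mul_pos hc (eulerBeta_pos h1 h2)) (eulerBeta_pos hA hB)

lemma bbPmf_sum_one : ∑ l ∈ Finset.range (m + 1), bbPmf y n m s N l = 1 := by
  have hs : (s:ℝ) ≤ (N:ℝ) := Nat.cast_le.mpr hsN
  have hA : (0:ℝ) < n * y + s := by positivity
  have hB : (0:ℝ) < n * (1 - y) + N - s := by nlinarith
  have := beta_sum m (n * y + s) (n * (1 - y) + N - s) hA hB
  simp only [bbPmf_eq, ← Finset.sum_div, this]
  exact div_self (eulerBeta_pos hA hB).ne'

lemma bbPmf_succ {l : ℕ} (hl : l + 1 ≤ m) :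
    bbPmf y n m s N (l + 1) = (m.choose (l+1) : ℝ) *
      ((((l:ℝ) + (n * y + s)) / (((m:ℝ) - l - 1) + (n * (1 - y) + N - s))) *
        eulerBeta ((l : ℝ) + (n * y + s)) (((m : ℝ) - l) + (n * (1 - y) + N - s))) /
      eulerBeta (n * y + s) (n * (1 - y) + N - s) := by
  have hs : (s:ℝ) ≤ (N:ℝ) := Nat.cast_le.mpr hsN
  have hml : ((l:ℝ) + 1) ≤ (m:ℝ) := by exact_mod_cast Nat.cast_le.mpr hl
  have h1 : (0:ℝ) < (l:ℝ) + (n * y + s) := by positivity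
  have h2 : (0:ℝ) < ((m:ℝ) - l - 1) + (n * (1 - y) + N - s) := by nlinarith
  rw [bbPmf_eq]
  have e1 : ((l+1 : ℕ) : ℝ) + (n * y + s) = ((l:ℝ) + (n * y + s)) + 1 := by push_cast; ring
  have e2 : ((m:ℝ) - (l+1:ℕ)) + (n * (1 - y) + N - s)
      = ((m:ℝ) - l - 1) + (n * (1 - y) + N - s) := by push_cast; ring
  have e3 : (((m:ℝ) - l - 1) + (n * (1 - y) + N - s)) + 1
      = ((m:ℝ) - l) + (n * (1 - y) + N - s) := by ring
  rw [e1, e2, eulerBeta_shift h1 h2, e3]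
end

lemma cross_adj {n ylo yhi : ℝ} {m s N : ℕ}
    (hn : 0 < n) (h0 : 0 < ylo) (h1 : ylo < yhi) (h2 : yhi < 1) (hsN : s ≤ N)
    {l : ℕ} (hl : l + 1 ≤ m) :
    bbPmf yhi n m s N l * bbPmf ylo n m s N (l + 1) ≤
      bbPmf ylo n m s N l * bbPmf yhi n m s N (l + 1) := by
  have hs : (s:ℝ) ≤ (N:ℝ) := Nat.cast_le.mpr hsN
  have hml : ((l:ℝ) + 1) ≤ (m:ℝ) := by exact_mod_cast Nat.cast_le.mpr hl
  have hlo1 : ylo < 1 := h1.trans h2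
  have hhi0 : 0 < yhi := h0.trans h1
  set Ahi := n * yhi + (s:ℝ) with hAhi
  set Bhi := n * (1 - yhi) + (N:ℝ) - (s:ℝ) with hBhi
  set Alo := n * ylo + (s:ℝ) with hAlo
  set Blo := n * (1 - ylo) + (N:ℝ) - (s:ℝ) with hBlo
  have hAhip : 0 < Ahi := by positivity
  have hAlop : 0 < Alo := by positivity
  have hBhip : 0 < Bhi := by rw [hBhi]; nlinarith
  have hBlop : 0 < Blo := by rw [hBlo]; nlinarith
  set c := (m:ℝ) - l - 1 with hc
  have hcp : 0 ≤ c := by rw [hc]; linarith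
  have key : ((l:ℝ) + Alo) / (c + Blo) ≤ ((l:ℝ) + Ahi) / (c + Bhi) := by
    rw [div_le_div_iff₀ (by linarith) (by linarith)]
    have hlnn : (0:ℝ) ≤ (l:ℝ) := Nat.cast_nonneg _
    have hd : Ahi = Alo + n * (yhi - ylo) := by rw [hAhi, hAlo]; ring
    have hd2 : Bhi = Blo - n * (yhi - ylo) := by rw [hBhi, hBlo]; ring
    have hdp : 0 < n * (yhi - ylo) := mul_pos hn (by linarith)
    have hkey : 0 ≤ n * (yhi - ylo) * ((l:ℝ) + Alo + c + Blo) :=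
      mul_nonneg hdp.le (by linarith)
    rw [hd, hd2]
    nlinarith [hkey]
  set Ehi := eulerBeta ((l : ℝ) + Ahi) (((m : ℝ) - l) + Bhi) with hEhi
  set Elo := eulerBeta ((l : ℝ) + Alo) (((m : ℝ) - l) + Blo) with hElo
  set Dhi := eulerBeta Ahi Bhi with hDhi
  set Dlo := eulerBeta Alo Blo with hDlo
  have hEhip : 0 < Ehi := eulerBeta_pos (by positivity) (by nlinarith)
  have hElop : 0 < Elo := eulerBeta_pos (by positivity) (by nlinarith)
  have hDhip : 0 < Dhi := eulerBeta_pos hAhip hBhip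
  have hDlop : 0 < Dlo := eulerBeta_pos hAlop hBlop
  rw [bbPmf_succ hn h0 hlo1 hsN hl, bbPmf_succ hn hhi0 h2 hsN hl,
    bbPmf_eq yhi, bbPmf_eq ylo]
  set F := (m.choose l : ℝ) * (m.choose (l+1) : ℝ) * Ehi * Elo / (Dhi * Dlo) with hF
  have hFnn : 0 ≤ F := by
    rw [hF]
    exact div_nonneg
      (mul_nonneg (mul_nonneg (mul_nonneg (Nat.cast_nonneg _) (Nat.cast_nonneg _))
        hEhip.le) hElop.le) (mul_pos hDhip hDlop).le
  calc (m.choose l : ℝ) * Ehi / Dhi *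
        ((m.choose (l+1) : ℝ) * (((l:ℝ) + Alo) / (c + Blo) * Elo) / Dlo)
      = F * (((l:ℝ) + Alo) / (c + Blo)) := by rw [hF]; ring
    _ ≤ F * (((l:ℝ) + Ahi) / (c + Bhi)) := mul_le_mul_of_nonneg_left key hFnn
    _ = (m.choose l : ℝ) * Elo / Dlo *
        ((m.choose (l+1) : ℝ) * (((l:ℝ) + Ahi) / (c + Bhi) * Ehi) / Dhi) := by rw [hF]; ring

/-- Theorem 1: the Beta-Binomial distribution with larger prior mean parameter first-order
stochastically dominates the one with smaller prior mean parameter. -/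
theorem bbPmf_stochDom_of_mean_le (n ylo yhi : ℝ) (m s N : ℕ)
    (hn : 0 < n) (h0 : 0 < ylo) (h1 : ylo < yhi) (h2 : yhi < 1)
    (hm : 1 ≤ m) (hsN : s ≤ N) :
    ∀ l ≤ m, ∑ j ∈ Finset.range (l + 1), bbPmf yhi n m s N j ≤
      ∑ j ∈ Finset.range (l + 1), bbPmf ylo n m s N j := by
  intro l hl
  have hhi0 : 0 < yhi := h0.trans h1
  have hlo1 : ylo < 1 := h1.trans h2
  set phi : ℕ → ℝ := fun j => bbPmf yhi n m s N j with hphi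
  set plo : ℕ → ℝ := fun j => bbPmf ylo n m s N j with hplo
  have hpol : ∀ j ≤ m, 0 < plo j := fun j hj => bbPmf_pos hn h0 hlo1 hsN hj
  have hpoh : ∀ j ≤ m, 0 < phi j := fun j hj => bbPmf_pos hn hhi0 h2 hsN hj
  have mono : ∀ j k, j ≤ k → k ≤ m → phi j / plo j ≤ phi k / plo k := by
    intro j k hjk
    induction k, hjk using Nat.le_induction with
    | base => intro _; exact le_refl _
    | succ k hk ih =>
      intro hkm
      refine (ih (by omega)).trans ?_
      rw [div_le_div_iff₀ (hpol k (by omega)) (hpol (k+1) hkm)]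
      have := cross_adj (ylo := ylo) (yhi := yhi) (m := m) (s := s) (N := N)
        hn h0 h1 h2 hsN (l := k) hkm
      linarith
  have cross : ∀ j k, j ≤ k → k ≤ m → phi j * plo k ≤ plo j * phi k := by
    intro j k hjk hkm
    have h := mono j k hjk hkm
    rw [div_le_div_iff₀ (hpol j (hjk.trans hkm)) (hpol k hkm)] at h
    linarith
  set A := ∑ j ∈ Finset.range (l+1), phi j with hA
  set B := ∑ j ∈ Finset.range (l+1), plo j with hB
  set A' := ∑ j ∈ Finset.Ico (l+1) (m+1), phi j with hA'
  set B' := ∑ j ∈ Finset.Ico (l+1) (m+1), plo j with hB'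
  have htotH : A + A' = 1 := by
    rw [hA, hA', Finset.range_eq_Ico,
      Finset.sum_Ico_consecutive _ (Nat.zero_le _) (by omega)]
    rw [← Finset.range_eq_Ico] at *
    exact bbPmf_sum_one hn hhi0 h2 hsN
  have htotL : B + B' = 1 := by
    rw [hB, hB', Finset.range_eq_Ico,
      Finset.sum_Ico_consecutive _ (Nat.zero_le _) (by omega)]
    rw [← Finset.range_eq_Ico] at *
    exact bbPmf_sum_one hn h0 hlo1 hsN
  have crossSum : A * B' ≤ B * A' := by
    rw [hA, hA', hB, hB', Finset.sum_mul_sum, Finset.sum_mul_sum]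
    refine Finset.sum_le_sum fun j hj => Finset.sum_le_sum fun k hk => ?_
    simp only [Finset.mem_range, Finset.mem_Ico] at hj hk
    exact cross j k (by omega) (by omega)
  have e1 : A' = 1 - A := by linarith
  have e2 : B' = 1 - B := by linarith
  rw [e1, e2] at crossSum
  nlinarith [crossSum]
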